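/- Let u : ℤ → ℂ and define h⁽ⁱ⁾ₙ for i ≥ 0, n ∈ ℤ by the recursion h⁽⁰⁾ₙ = 1/2 and h⁽ⁱ⁺¹⁾ₙ = uₙ·Σ_{s=0}^{i}(h⁽ˢ⁾ₙ₊₁ + h⁽ˢ⁾ₙ)(h⁽ⁱ⁻ˢ⁾ₙ + h⁽ⁱ⁻ˢ⁾ₙ₋₁) − Σ_{s=1}^{i} h⁽ˢ⁾ₙ·h⁽ⁱ⁺¹⁻ˢ⁾ₙ. For λ ∈ ℂ, λ ≠ 0, define the 2×2 matrices H⁽ˢ⁾ₙ = [[h⁽ˢ⁺¹⁾ₙ, −uₙ(h⁽ˢ⁾ₙ₊₁ + h⁽ˢ⁾ₙ)], [λ(h⁽ˢ⁾ₙ + h⁽ˢ⁾ₙ₋₁), −λ(h⁽ˢ⁾ₙ + h⁽ˢ⁾ₙ₋₁) + h⁽ˢ⁺¹⁾ₙ₋₁]], U⁽ⁱ⁾ₙ = Σ_{s=0}^{i−1} λ^{i−1−s}·H⁽ˢ⁾ₙ, and Lₙ = [[1, −uₙ/λ], [1, 0]]. Then for every i ≥ 1 and every n: U⁽ⁱ⁾ₙ₊₁Lₙ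 − LₙU⁽ⁱ⁾ₙ = [[0, −uₙ(h⁽ⁱ⁾ₙ₊₁ − h⁽ⁱ⁾ₙ₋₁)/λ], [0, 0]]. -/

import Mathlib

def volG (u : ℤ → ℂ) (h : ℕ → ℤ → ℂ) (n : ℤ) : ℕ → ℂ
  | 0 => 0
  | b + 1 => h (b + 1) (n + 1) - h (b + 1) n
      - (u (n + 1) * (h b (n + 2) + h b (n + 1)) - u n * (h b n + h b (n - 1)))

lemma volA (u : ℤ → ℂ) (h : ℕ → ℤ → ℂ)
    (h0 : ∀ n : ℤ, h 0 n = 1 / 2)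
    (hrec : ∀ (i : ℕ) (n : ℤ), h (i + 1) n =
      u n * ∑ s ∈ Finset.range (i + 1),
          (h s (n + 1) + h s n) * (h (i - s) n + h (i - s) (n - 1))
        - ∑ s ∈ Finset.Icc 1 i, h s n * h (i + 1 - s) n)
    (k : ℕ) (n : ℤ) :
    ∑ a ∈ Finset.range (k + 2), h a n * h (k + 1 - a) n
      = u n * ∑ s ∈ Finset.range (k + 1),
          (h s (n + 1) + h s n) * (h (k - s) n + h (k - s) (n - 1)) := by
  have hIcc : ∑ s ∈ Finset.Icc 1 k, h s n * h (k + 1 - s) n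
      = ∑ a ∈ Finset.range k, h (a + 1) n * h (k - a) n := by
    rw [show Finset.Icc 1 k = Finset.Ico 1 (k+1) by rfl, Finset.sum_Ico_eq_sum_range]
    apply Finset.sum_congr (by norm_num)
    intro a ha
    simp only [Finset.mem_range] at ha
    congr 2 <;> omega
  have hsplit : ∑ a ∈ Finset.range (k + 2), h a n * h (k + 1 - a) n
      = (∑ a ∈ Finset.range k, h (a + 1) n * h (k - a) n)
        + h (k + 1) n * h 0 n + h 0 n * h (k + 1) n := by
    rw [Finset.sum_range_succ', Finset.sum_range_succ]
    have : ∀ a ∈ Finset.range k, h (a + 1) n * h (k + 1 - (a + 1)) n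
        = h (a + 1) n * h (k - a) n := by
      intro a ha; congr 2; omega
    rw [Finset.sum_congr rfl this]
    norm_num
  have hrk := hrec k n
  rw [hsplit, ← hIcc, h0]
  rw [hrk]; ring

lemma volConv (u : ℤ → ℂ) (h : ℕ → ℤ → ℂ)
    (h0 : ∀ n : ℤ, h 0 n = 1 / 2)
    (hrec : ∀ (i : ℕ) (n : ℤ), h (i + 1) n =
      u n * ∑ s ∈ Finset.range (i + 1),
          (h s (n + 1) + h s n) * (h (i - s) n + h (i - s) (n - 1))
        - ∑ s ∈ Finset.Icc 1 i, h s n * h (i + 1 - s) n)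
    (k : ℕ) (n : ℤ) :
    ∑ a ∈ Finset.range (k + 2), (h a n + h a (n + 1)) * volG u h n (k + 1 - a) = 0 := by
  -- peel off a = k+1 (whose volG argument is 0)
  rw [Finset.sum_range_succ]
  have e1 : k + 1 - (k + 1) = 0 := by omega
  rw [e1, show volG u h n 0 = 0 from rfl, mul_zero, add_zero]
  -- rewrite volG in the remaining sum
  have expand : ∀ a ∈ Finset.range (k + 1),
      (h a n + h a (n + 1)) * volG u h n (k + 1 - a)
      = (h a n + h a (n + 1)) * (h (k - a + 1) (n + 1) - h (k - a + 1) n)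
        - u (n + 1) * ((h a n + h a (n + 1)) * (h (k - a) (n + 2) + h (k - a) (n + 1)))
        + u n * ((h a n + h a (n + 1)) * (h (k - a) n + h (k - a) (n - 1))) := by
    intro a ha
    simp only [Finset.mem_range] at ha
    have e2 : k + 1 - a = (k - a) + 1 := by omega
    rw [e2, show ∀ b, volG u h n (b+1) = h (b + 1) (n + 1) - h (b + 1) n
      - (u (n + 1) * (h b (n + 2) + h b (n + 1)) - u n * (h b n + h b (n - 1))) from fun _ => rfl]
    ring
  rw [Finset.sum_congr rfl expand]
  rw [Finset.sum_add_distrib, Finset.sum_sub_distrib, ← Finset.mul_sum, ← Finset.mul_sum]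
  -- T1: cross-term cancellation + volA at n and n+1
  have refl1 : ∀ (m m' : ℤ), ∑ a ∈ Finset.range (k + 2), h a m * h (k + 1 - a) m'
      = ∑ a ∈ Finset.range (k + 2), h a m' * h (k + 1 - a) m := by
    intro m m'
    rw [← Finset.sum_range_reflect]
    apply Finset.sum_congr rfl
    intro a ha
    simp only [Finset.mem_range] at ha
    have e3 : k + 1 - (k + 2 - 1 - a) = a := by omega
    have e4 : k + 2 - 1 - a = k + 1 - a := by omega
    rw [e3, e4, mul_comm]
  have T1 : ∑ a ∈ Finset.range (k + 1),
        (h a n + h a (n + 1)) * (h (k - a + 1) (n + 1) - h (k - a + 1) n)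
      = u (n + 1) * (∑ s ∈ Finset.range (k + 1),
          (h s (n + 2) + h s (n + 1)) * (h (k - s) (n + 1) + h (k - s) n))
        - u n * (∑ s ∈ Finset.range (k + 1),
          (h s (n + 1) + h s n) * (h (k - s) n + h (k - s) (n - 1))) := by
    have full : ∑ a ∈ Finset.range (k + 1),
          (h a n + h a (n + 1)) * (h (k - a + 1) (n + 1) - h (k - a + 1) n)
        = ∑ a ∈ Finset.range (k + 2),
          (h a n + h a (n + 1)) * (h (k + 1 - a) (n + 1) - h (k + 1 - a) n) := by
      rw [Finset.sum_range_succ (n := k + 1), e1, h0, h0, sub_self, mul_zero, add_zero]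
      apply Finset.sum_congr rfl
      intro a ha
      simp only [Finset.mem_range] at ha
      have e2 : k + 1 - a = (k - a) + 1 := by omega
      rw [e2]
    rw [full]
    have split : ∑ a ∈ Finset.range (k + 2),
          (h a n + h a (n + 1)) * (h (k + 1 - a) (n + 1) - h (k + 1 - a) n)
        = (∑ a ∈ Finset.range (k + 2), h a (n + 1) * h (k + 1 - a) (n + 1))
          - (∑ a ∈ Finset.range (k + 2), h a n * h (k + 1 - a) n)
          + ((∑ a ∈ Finset.range (k + 2), h a n * h (k + 1 - a) (n + 1))
          - (∑ a ∈ Finset.range (k + 2), h a (n + 1) * h (k + 1 - a) n)) := by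
      rw [← Finset.sum_sub_distrib, ← Finset.sum_sub_distrib, ← Finset.sum_add_distrib]
      apply Finset.sum_congr rfl
      intro a _; ring
    have vA' := volA u h h0 hrec k (n + 1)
    rw [show (n:ℤ) + 1 + 1 = n + 2 from by ring, show (n:ℤ) + 1 - 1 = n from by ring] at vA'
    rw [split, refl1 n (n + 1), sub_self, add_zero, volA u h h0 hrec k n, vA']
  rw [T1]
  -- T2 reflection
  have T2 : ∑ a ∈ Finset.range (k + 1),
        (h a n + h a (n + 1)) * (h (k - a) (n + 2) + h (k - a) (n + 1))
      = ∑ s ∈ Finset.range (k + 1),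
        (h s (n + 2) + h s (n + 1)) * (h (k - s) (n + 1) + h (k - s) n) := by
    rw [← Finset.sum_range_reflect]
    apply Finset.sum_congr rfl
    intro a ha
    simp only [Finset.mem_range] at ha
    have e3 : k - (k + 1 - 1 - a) = a := by omega
    have e4 : k + 1 - 1 - a = k - a := by omega
    rw [e3, e4]
    ring
  have T3 : ∑ a ∈ Finset.range (k + 1),
        (h a n + h a (n + 1)) * (h (k - a) n + h (k - a) (n - 1))
      = ∑ s ∈ Finset.range (k + 1),
        (h s (n + 1) + h s n) * (h (k - s) n + h (k - s) (n - 1)) :=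
    Finset.sum_congr rfl (fun a _ => by ring)
  rw [T2, T3]
  ring

lemma volB (u : ℤ → ℂ) (h : ℕ → ℤ → ℂ)
    (h0 : ∀ n : ℤ, h 0 n = 1 / 2)
    (hrec : ∀ (i : ℕ) (n : ℤ), h (i + 1) n =
      u n * ∑ s ∈ Finset.range (i + 1),
          (h s (n + 1) + h s n) * (h (i - s) n + h (i - s) (n - 1))
        - ∑ s ∈ Finset.Icc 1 i, h s n * h (i + 1 - s) n) :
    ∀ (s : ℕ) (n : ℤ), volG u h n s = 0 := by
  intro s
  induction s using Nat.strong_induction_on with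
  | _ s ih =>
    intro n
    match s with
    | 0 => rfl
    | k + 1 =>
      have conv := volConv u h h0 hrec k n
      rw [Finset.sum_range_succ'] at conv
      have hz : ∀ a ∈ Finset.range (k + 1),
          (h (a + 1) n + h (a + 1) (n + 1)) * volG u h n (k + 1 - (a + 1)) = 0 := by
        intro a ha
        simp only [Finset.mem_range] at ha
        rw [ih (k + 1 - (a + 1)) (by omega) n, mul_zero]
      rw [Finset.sum_congr rfl hz, Finset.sum_const_zero, zero_add] at conv
      have e0 : k + 1 - 0 = k + 1 := rfl
      rw [e0, h0, h0] at conv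
      have : volG u h n (k + 1) = 0 := by
        have h2 : (1/2 + 1/2 : ℂ) = 1 := by norm_num
        rw [h2, one_mul] at conv
        exact conv
      exact this

theorem volterra_hierarchy_zero_curvature
    (u : ℤ → ℂ) (h : ℕ → ℤ → ℂ)
    (h0 : ∀ n : ℤ, h 0 n = 1 / 2)
    (hrec : ∀ (i : ℕ) (n : ℤ), h (i + 1) n =
      u n * ∑ s ∈ Finset.range (i + 1),
          (h s (n + 1) + h s n) * (h (i - s) n + h (i - s) (n - 1))
        - ∑ s ∈ Finset.Icc 1 i, h s n * h (i + 1 - s) n)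
    (lam : ℂ) (hlam : lam ≠ 0)
    (H : ℕ → ℤ → Matrix (Fin 2) (Fin 2) ℂ)
    (hH : ∀ (s : ℕ) (n : ℤ), H s n =
      !![h (s + 1) n, -u n * (h s (n + 1) + h s n);
         lam * (h s n + h s (n - 1)),
           -lam * (h s n + h s (n - 1)) + h (s + 1) (n - 1)])
    (U : ℕ → ℤ → Matrix (Fin 2) (Fin 2) ℂ)
    (hU : ∀ (i : ℕ) (n : ℤ), U i n = ∑ s ∈ Finset.range i, lam ^ (i - 1 - s) • H s n)
    (L : ℤ → Matrix (Fin 2) (Fin 2) ℂ)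
    (hL : ∀ n : ℤ, L n = !![1, -u n / lam; 1, 0]) :
    ∀ i : ℕ, 1 ≤ i → ∀ n : ℤ,
      U i (n + 1) * L n - L n * U i n
        = !![0, -u n * (h i (n + 1) - h i (n - 1)) / lam; 0, 0] := by
  intro i hi n
  -- the key pointwise commutator
  have key : ∀ s : ℕ, H s (n + 1) * L n - L n * H s n
      = !![0, u n * (lam * (h s (n + 1) - h s (n - 1))
            - (h (s + 1) (n + 1) - h (s + 1) (n - 1))) / lam; 0, 0] := by
    intro s
    have hB := volB u h h0 hrec (s + 1) n
    rw [show volG u h n (s + 1) = h (s + 1) (n + 1) - h (s + 1) n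
      - (u (n + 1) * (h s (n + 2) + h s (n + 1)) - u n * (h s n + h s (n - 1)))
      from rfl] at hB
    rw [hH s (n + 1), hH s n, hL n,
      show (n : ℤ) + 1 + 1 = n + 2 from by ring,
      show (n : ℤ) + 1 - 1 = n from by ring]
    set x1 := h (s + 1) (n + 1) with hx1
    set x2 := h (s + 1) n with hx2
    set x3 := h (s + 1) (n - 1) with hx3
    set y1 := h s (n + 2) with hy1
    set y2 := h s (n + 1) with hy2
    set y3 := h s n with hy3
    set y4 := h s (n - 1) with hy4
    set av := u n with ha
    set bv := u (n + 1) with hb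
    clear_value x1 x2 x3 y1 y2 y3 y4 av bv
    ext p q
    fin_cases p <;> fin_cases q <;>
      simp [Matrix.mul_apply, Fin.sum_univ_succ] <;>
      field_simp <;>
      (first
        | ring1
        | linear_combination lam * hB
        | linear_combination hB)
  rw [hU i (n + 1), hU i n, Finset.sum_mul, Finset.mul_sum, ← Finset.sum_sub_distrib]
  have step : ∀ s ∈ Finset.range i,
      lam ^ (i - 1 - s) • H s (n + 1) * L n - L n * lam ^ (i - 1 - s) • H s n
      = lam ^ (i - 1 - s) • (H s (n + 1) * L n - L n * H s n) := by
    intro s _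
    rw [smul_mul_assoc, mul_smul_comm, smul_sub]
  rw [Finset.sum_congr rfl step]
  have step2 : ∀ s ∈ Finset.range i,
      lam ^ (i - 1 - s) • (H s (n + 1) * L n - L n * H s n)
      = lam ^ (i - 1 - s) • !![0, u n * (lam * (h s (n + 1) - h s (n - 1))
            - (h (s + 1) (n + 1) - h (s + 1) (n - 1))) / lam; 0, 0] := by
    intro s _; rw [key s]
  rw [Finset.sum_congr rfl step2]
  have tele : ∑ s ∈ Finset.range i,
      (lam ^ (i - s) * (h s (n + 1) - h s (n - 1))
        - lam ^ (i - (s + 1)) * (h (s + 1) (n + 1) - h (s + 1) (n - 1)))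
      = lam ^ (i - 0) * (h 0 (n + 1) - h 0 (n - 1))
        - lam ^ (i - i) * (h i (n + 1) - h i (n - 1)) :=
    Finset.sum_range_sub' (fun s => lam ^ (i - s) * (h s (n + 1) - h s (n - 1))) i
  rw [h0, h0, sub_self, mul_zero, Nat.sub_self, pow_zero, one_mul, zero_sub] at tele
  ext a b
  fin_cases a <;> fin_cases b <;>
    simp [Matrix.sum_apply]
  · -- entry (0,1)
    have congrterm : ∀ s ∈ Finset.range i,
        lam ^ (i - 1 - s) * (u n * (lam * (h s (n + 1) - h s (n - 1))
            - (h (s + 1) (n + 1) - h (s + 1) (n - 1))) / lam)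
        = (u n / lam) * (lam ^ (i - s) * (h s (n + 1) - h s (n - 1))
            - lam ^ (i - (s + 1)) * (h (s + 1) (n + 1) - h (s + 1) (n - 1))) := by
      intro s hs
      simp only [Finset.mem_range] at hs
      have e1 : i - s = (i - 1 - s) + 1 := by omega
      have e2 : i - (s + 1) = i - 1 - s := by omega
      rw [e1, e2, pow_succ]
      field_simp
    rw [Finset.sum_congr rfl congrterm, ← Finset.mul_sum, tele]
    field_simp
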